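/- Let (X,d) be a metric space satisfying the ⊠-inequalities and let x,y,z,w ∈ X be four distinct points with {x,y,z,w} under-distance with respect to both {x,w} and {y,w}. Suppose x',y',z' ∈ ℝ² satisfy ‖x'−y'‖ = d(x,y), ‖y'−z'‖ = d(y,z), ‖z'−x'‖ = d(z,x). Then x', y', z' are not collinear. -/

import Mathlib

set_option maxHeartbeats 1000000

noncomputable section

/-- A metric space satisfies the ⊠-inequalities. -/
def BoxIneq (X : Type*) [MetricSpace X] : Prop :=
  ∀ t ∈ Set.Icc (0:ℝ) 1, ∀ s ∈ Set.Icc (0:ℝ) 1, ∀ x y z w : X,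
    0 ≤ (1 - t) * (1 - s) * dist x y ^ 2 + t * (1 - s) * dist y z ^ 2
      + t * s * dist z w ^ 2 + (1 - t) * s * dist w x ^ 2
      - t * (1 - t) * dist x z ^ 2 - s * (1 - s) * dist y w ^ 2

/-- `{x,y,z,w}` is under-distance with respect to `{y,w}`: every configuration in `ℝ³`
realizing the five distances `d(x,y), d(y,z), d(z,x), d(x,w), d(w,z)` puts the points
corresponding to `y` and `w` strictly farther apart than `d(y,w)`.
Under-distance with respect to other pairs is obtained by permuting the arguments. -/
def UnderDistance {X : Type*} [MetricSpace X] (x y z w : X) : Prop :=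
  ∀ x' y' z' w' : EuclideanSpace ℝ (Fin 3),
    dist x' y' = dist x y → dist y' z' = dist y z → dist z' x' = dist z x →
    dist x' w' = dist x w → dist w' z' = dist w z →
    dist y w < dist y' w'

/-- Limit form (as `s → 0`) of the ⊠-inequality along a degenerate triple. -/
lemma box_mid {X : Type*} [MetricSpace X] (hX : BoxIneq X) (x y z w : X)
    (hmid : dist x y + dist y z = dist x z) :
    dist y w ^ 2 * dist x z ≤ dist y z * dist w x ^ 2 + dist x y * dist z w ^ 2
      - dist x y * dist y z * dist x z := by
  set m := dist x y with hm
  set n := dist y z with hn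
  set D := dist x z with hD
  set Q := dist z w with hQ
  set R := dist w x with hR
  set W := dist y w with hW
  have hm0 : 0 ≤ m := dist_nonneg
  have hn0 : 0 ≤ n := dist_nonneg
  have hQ0 : 0 ≤ Q := dist_nonneg
  have hR0 : 0 ≤ R := dist_nonneg
  have hW0 : 0 ≤ W := dist_nonneg
  rcases eq_or_lt_of_le (dist_nonneg : (0:ℝ) ≤ D) with h0 | hDpos
  · have hm' : m = 0 := by linarith
    have hn' : n = 0 := by linarith
    have hD0 : D = 0 := h0.symm
    rw [hm', hn', hD0]; ring_nf; exact le_refl 0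
  · have hD' : D ≠ 0 := ne_of_gt hDpos
    have key : ∀ s : ℝ, 0 < s → s ≤ 1 →
        (1-s) * W^2 * D ≤ n * R^2 + m * Q^2 - m * n * D := by
      intro s hs hs1
      have ht0 : 0 ≤ m / D := by positivity
      have ht1 : m / D ≤ 1 := by rw [div_le_one hDpos]; linarith
      have hb := hX (m/D) ⟨ht0, ht1⟩ s ⟨hs.le, hs1⟩ x y z w
      rw [← hm, ← hn, ← hD, ← hQ, ← hR, ← hW] at hb
      have h1 : 1 - m/D = n/D := by field_simp; linarith
      rw [h1] at hb
      have hb2 : 0 ≤ D * ((n/D) * (1 - s) * m ^ 2 + (m/D) * (1 - s) * n ^ 2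
          + (m/D) * s * Q ^ 2 + (n/D) * s * R ^ 2 - (m/D) * (n/D) * D ^ 2
          - s * (1 - s) * W ^ 2) := mul_nonneg hDpos.le hb
      have hid : D * ((n/D) * (1 - s) * m ^ 2 + (m/D) * (1 - s) * n ^ 2
          + (m/D) * s * Q ^ 2 + (n/D) * s * R ^ 2 - (m/D) * (n/D) * D ^ 2
          - s * (1 - s) * W ^ 2)
          = n * (1 - s) * m ^ 2 + m * (1 - s) * n ^ 2 + m * s * Q ^ 2
            + n * s * R ^ 2 - m * n * D - s * (1 - s) * W ^ 2 * D := by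
        field_simp
      rw [hid] at hb2
      have hmn : n * (1 - s) * m ^ 2 + m * (1 - s) * n ^ 2 = (1 - s) * (m * n) * D := by
        rw [← hmid]; ring
      rw [hmn] at hb2
      nlinarith [mul_pos hs hs, hs]
    by_contra hcon
    push_neg at hcon
    have h1 := key 1 one_pos le_rfl
    have hC0 : 0 ≤ n * R^2 + m * Q^2 - m * n * D := by linarith
    have hWD : 0 < W^2 * D := lt_of_le_of_lt hC0 hcon
    set C := n * R^2 + m * Q^2 - m * n * D with hCdef
    set s : ℝ := (W^2 * D - C) / (2 * (W^2 * D)) with hsdef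
    have hs : 0 < s := by apply div_pos <;> linarith
    have hs1 : s ≤ 1 := by rw [div_le_one (by linarith)]; linarith
    have h2 := key s hs hs1
    have h3 : (1 - s) * W^2 * D = (W^2 * D + C) / 2 := by
      rw [hsdef, mul_assoc, sub_mul, one_mul, div_mul_eq_mul_div, mul_div_mul_right _ _ hWD.ne']; ring
    rw [h3] at h2
    linarith

/-- A point of `ℝ³` with given first two coordinates, third coordinate zero. -/
def pt (a b : ℝ) : EuclideanSpace ℝ (Fin 3) := (WithLp.equiv 2 (Fin 3 → ℝ)).symm ![a, b, 0]

lemma dist_pt (a b a' b' : ℝ) :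
    dist (pt a b) (pt a' b') = Real.sqrt ((a - a')^2 + (b - b')^2) := by
  rw [EuclideanSpace.dist_eq]
  simp [pt, Fin.sum_univ_three, Real.dist_eq, sq_abs]

/-- Construction of the apex point over the segment from `a` to `c`. -/
lemma w_exists {X : Type*} [MetricSpace X] (a c w : X) (hac : a ≠ c) :
    ∃ u h : ℝ, 0 ≤ h ∧ u^2 + h^2 = dist a w ^ 2 ∧
      (u - dist a c)^2 + h^2 = dist w c ^ 2 ∧
      2 * u * dist a c = dist a c ^2 + dist a w ^2 - dist w c ^2 := by
  set L := dist a c with hL'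
  set p := dist a w with hp'
  set q := dist w c with hq'
  have hL : 0 < L := dist_pos.mpr hac
  have t1 : L ≤ p + q := dist_triangle a w c
  have t2 : p ≤ L + q := by
    calc p ≤ dist a c + dist c w := dist_triangle a c w
    _ = L + q := by rw [dist_comm c w]
  have t3 : q ≤ p + L := by
    calc q ≤ dist w a + dist a c := dist_triangle w a c
    _ = p + L := by rw [dist_comm w a]
  refine ⟨(L^2 + p^2 - q^2) / (2*L), Real.sqrt (p^2 - ((L^2 + p^2 - q^2) / (2*L))^2),
    Real.sqrt_nonneg _, ?_, ?_, ?_⟩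
  · have hu2 : ((L^2 + p^2 - q^2) / (2*L))^2 ≤ p^2 := by
      rw [div_pow, div_le_iff₀ (by positivity)]
      nlinarith [mul_nonneg (mul_nonneg (mul_nonneg (by linarith : (0:ℝ) ≤ p + q - L)
        (by nlinarith : (0:ℝ) ≤ p + q + L)) (by linarith : (0:ℝ) ≤ L - p + q))
        (by linarith : (0:ℝ) ≤ L + p - q)]
    rw [Real.sq_sqrt (by linarith)]; ring
  · have hu2 : ((L^2 + p^2 - q^2) / (2*L))^2 ≤ p^2 := by
      rw [div_pow, div_le_iff₀ (by positivity)]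
      nlinarith [mul_nonneg (mul_nonneg (mul_nonneg (by linarith : (0:ℝ) ≤ p + q - L)
        (by nlinarith : (0:ℝ) ≤ p + q + L)) (by linarith : (0:ℝ) ≤ L - p + q))
        (by linarith : (0:ℝ) ≤ L + p - q)]
    rw [Real.sq_sqrt (by linarith)]
    field_simp
    ring
  · field_simp

/-- Degenerate case where `a` is the midpoint: contradicts `UnderDistance a b c w`. -/
lemma mid_first {X : Type*} [MetricSpace X] (hX : BoxIneq X) (a b c w : X)
    (hac : a ≠ c) (hU : UnderDistance a b c w)
    (hdeg : dist b a + dist a c = dist b c) : False := by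
  obtain ⟨u, h, hh0, hup, huq, hulin⟩ := w_exists a c w hac
  set L := dist a c with hL'
  set m := dist a b with hm'
  set p := dist a w with hp'
  set q := dist w c with hq'
  have hL : 0 < L := dist_pos.mpr hac
  have hm0 : 0 ≤ m := dist_nonneg
  have hp0 : 0 ≤ p := dist_nonneg
  have hq0 : 0 ≤ q := dist_nonneg
  have hDbc : dist b c = m + L := by
    rw [← hdeg, dist_comm b a]
  have e1 : dist (pt 0 0) (pt (-m) 0) = dist a b := by
    rw [dist_pt, ← hm', show (0 - -m)^2 + ((0:ℝ) - 0)^2 = m^2 by ring, Real.sqrt_sq hm0]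
  have e2 : dist (pt (-m) 0) (pt L 0) = dist b c := by
    rw [dist_pt, hDbc, show (-m - L)^2 + ((0:ℝ) - 0)^2 = (m + L)^2 by ring,
      Real.sqrt_sq (by linarith)]
  have e3 : dist (pt L 0) (pt 0 0) = dist c a := by
    rw [dist_pt, dist_comm c a, ← hL', show (L - 0)^2 + ((0:ℝ) - 0)^2 = L^2 by ring,
      Real.sqrt_sq hL.le]
  have e4 : dist (pt 0 0) (pt u h) = dist a w := by
    rw [dist_pt]
    rw [show (0 - u)^2 + (0 - h)^2 = u^2 + h^2 by ring, hup, Real.sqrt_sq hp0]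
  have e5 : dist (pt u h) (pt L 0) = dist w c := by
    rw [dist_pt]
    rw [show (u - L)^2 + (h - 0)^2 = (u - L)^2 + h^2 by ring, huq, Real.sqrt_sq hq0]
  have hlt := hU (pt 0 0) (pt (-m) 0) (pt L 0) (pt u h) e1 e2 e3 e4 e5
  have hBW : dist (pt (-m) 0) (pt u h) ^ 2 = p^2 + 2*u*m + m^2 := by
    rw [dist_pt, Real.sq_sqrt (by positivity)]
    nlinarith [hup]
  have hbox := box_mid hX b a c w hdeg
  rw [dist_comm b a, dist_comm c w, dist_comm w b, hDbc] at hbox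
  have hulin_m : 2*u*L*m = (L^2 + p^2 - q^2)*m := by rw [hulin]
  have hfin : dist (pt (-m) 0) (pt u h) ^ 2 ≤ dist b w ^ 2 := by
    nlinarith [hBW, hbox, hulin_m, hL]
  nlinarith [hlt, hfin, dist_nonneg (x := b) (y := w)]

/-- Degenerate case where `c` is the midpoint: contradicts `UnderDistance a b c w`. -/
lemma mid_last {X : Type*} [MetricSpace X] (hX : BoxIneq X) (a b c w : X)
    (hac : a ≠ c) (hU : UnderDistance a b c w)
    (hdeg : dist a c + dist c b = dist a b) : False := by
  obtain ⟨u, h, hh0, hup, huq, hulin⟩ := w_exists a c w hac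
  set L := dist a c with hL'
  set n := dist c b with hn'
  set D := dist a b with hD'
  set p := dist a w with hp'
  set q := dist w c with hq'
  have hL : 0 < L := dist_pos.mpr hac
  have hn0 : 0 ≤ n := dist_nonneg
  have hD0 : 0 ≤ D := dist_nonneg
  have hp0 : 0 ≤ p := dist_nonneg
  have hq0 : 0 ≤ q := dist_nonneg
  have e1 : dist (pt 0 0) (pt D 0) = dist a b := by
    rw [dist_pt, ← hD', show (0 - D)^2 + ((0:ℝ) - 0)^2 = D^2 by ring, Real.sqrt_sq hD0]
  have e2 : dist (pt D 0) (pt L 0) = dist b c := by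
    rw [dist_pt, dist_comm b c, ← hn', show (D - L)^2 + ((0:ℝ) - 0)^2 = (D - L)^2 by ring,
      show D - L = n by linarith, Real.sqrt_sq hn0]
  have e3 : dist (pt L 0) (pt 0 0) = dist c a := by
    rw [dist_pt, dist_comm c a, ← hL', show (L - 0)^2 + ((0:ℝ) - 0)^2 = L^2 by ring,
      Real.sqrt_sq hL.le]
  have e4 : dist (pt 0 0) (pt u h) = dist a w := by
    rw [dist_pt]
    rw [show (0 - u)^2 + (0 - h)^2 = u^2 + h^2 by ring, hup, Real.sqrt_sq hp0]
  have e5 : dist (pt u h) (pt L 0) = dist w c := by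
    rw [dist_pt]
    rw [show (u - L)^2 + (h - 0)^2 = (u - L)^2 + h^2 by ring, huq, Real.sqrt_sq hq0]
  have hlt := hU (pt 0 0) (pt D 0) (pt L 0) (pt u h) e1 e2 e3 e4 e5
  have hBW : dist (pt D 0) (pt u h) ^ 2 = p^2 + D^2 - 2*u*D := by
    rw [dist_pt, Real.sq_sqrt (by positivity)]
    nlinarith [hup]
  have hbox := box_mid hX a c b w hdeg
  rw [dist_comm c w, dist_comm w a, ← hq', ← hD', ← hn', ← hp', ← hL'] at hbox
  have hulin_D : 2*u*L*D = (L^2 + p^2 - q^2)*D := by rw [hulin]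
  have h6 : L * dist (pt D 0) (pt u h) ^ 2 = L*p^2 + L*D^2 - (L^2+p^2-q^2)*D := by
    linear_combination L * hBW - hulin_D
  have hz : (L + n - D) * (p^2 - L*D) = 0 := by
    have hz0 : L + n - D = 0 := by linarith
    rw [hz0]; ring
  have h7 : L * dist (pt D 0) (pt u h) ^ 2 ≤ L * dist b w ^ 2 := by
    nlinarith [h6, hbox, hz]
  have hfin : dist (pt D 0) (pt u h) ^ 2 ≤ dist b w ^ 2 :=
    le_of_mul_le_mul_left h7 hL
  nlinarith [hlt, hfin, dist_nonneg (x := b) (y := w)]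

/-- Corollary 6.10: if `{x,y,z,w}` is under-distance with respect to both `{x,w}` and
`{y,w}`, then any planar comparison triangle for `x,y,z` is nondegenerate. -/
theorem underDistance_not_collinear {X : Type*} [MetricSpace X] (hX : BoxIneq X)
    (x y z w : X)
    (hxy : x ≠ y) (hxz : x ≠ z) (hxw : x ≠ w)
    (hyz : y ≠ z) (hyw : y ≠ w) (hzw : z ≠ w)
    (hxw' : UnderDistance y x z w) (hyw' : UnderDistance x y z w)
    (x' y' z' : EuclideanSpace ℝ (Fin 2))
    (h1 : dist x' y' = dist x y) (h2 : dist y' z' = dist y z)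
    (h3 : dist z' x' = dist z x) :
    ¬ Collinear ℝ ({x', y', z'} : Set (EuclideanSpace ℝ (Fin 2))) := by
  intro hcol
  have h3' : dist x' z' = dist x z := by rw [dist_comm x' z', h3, dist_comm z x]
  rcases hcol.wbtw_or_wbtw_or_wbtw with hb | hb | hb
  · -- y between x and z
    have hd := hb.dist_add_dist
    rw [h1, h2, h3'] at hd
    exact mid_first hX y x z w hyz hxw'
      (by rw [dist_comm x y] at hd; rw [dist_comm x y]; exact hd)
  · -- z between y and x
    have hd := hb.dist_add_dist
    rw [h2, h3, dist_comm y' x', h1] at hd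
    exact mid_last hX x y z w hxz hyw'
      (by rw [dist_comm x z, dist_comm z y]; linarith [hd])
  · -- x between z and y
    have hd := hb.dist_add_dist
    rw [h3, h1, dist_comm z' y', h2] at hd
    exact mid_first hX x y z w hxz hyw'
      (by rw [dist_comm y x, dist_comm x z]; linarith [hd])
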